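/- Let n ≥ 1 and let ρ : Matrix (Fin n) (Fin n) ℂ be a density matrix, i.e. ρ is Hermitian (ρᴴ = ρ), positive semidefinite, and has trace 1; let λ : Fin n → ℝ be its eigenvalues (Matrix.IsHermitian.eigenvalues). Then: (i) for every unitary matrix U ∈ Matrix.unitaryGroup (Fin n) ℂ, ∑ i, Real.negMulLog (Re ((U * ρ * Uᴴ) i i)) ≥ ∑ i, Real.negMulLog (λ i); and (ii) there exists a unitary U for which equality holds. Consequently, the minimum over all unitaries U of the Shannon entropy of the diagonal of U ρ Uᴴ equals the von Neumann entropy of ρ. -/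

import Mathlib

open Matrix
open scoped ComplexOrder

private lemma jensen_aux {n : ℕ} (s : Fin n → Fin n → ℝ) (lam : Fin n → ℝ)
    (hlam : ∀ j, 0 ≤ lam j)
    (hs0 : ∀ i j, 0 ≤ s i j)
    (hrow : ∀ i, ∑ j, s i j = 1)
    (hcol : ∀ j, ∑ i, s i j = 1) :
    ∑ j, Real.negMulLog (lam j) ≤ ∑ i, Real.negMulLog (∑ j, s i j * lam j) := by
  have h1 : ∀ i, ∑ j, s i j * Real.negMulLog (lam j) ≤
      Real.negMulLog (∑ j, s i j * lam j) := by
    intro i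
    simpa [smul_eq_mul] using
      Real.concaveOn_negMulLog.le_map_sum (t := Finset.univ) (w := s i) (p := lam)
        (fun j _ => hs0 i j) (hrow i) (fun j _ => hlam j)
  calc ∑ j, Real.negMulLog (lam j)
      = ∑ i, ∑ j, s i j * Real.negMulLog (lam j) := by
        rw [Finset.sum_comm]
        refine Finset.sum_congr rfl fun j _ => ?_
        rw [← Finset.sum_mul, hcol j, one_mul]
    _ ≤ ∑ i, Real.negMulLog (∑ j, s i j * lam j) :=
        Finset.sum_le_sum fun i _ => h1 i

/-- For a density matrix `ρ`, the Shannon entropy of the diagonal of `U ρ Uᴴ` is at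
least the Shannon entropy of the eigenvalues (the von Neumann entropy) for every
unitary `U`, and equality is attained for some unitary `U`.  Hence the minimum over
unitaries of the diagonal Shannon entropy is the von Neumann entropy of `ρ`. -/
theorem diag_entropy_ge_vonNeumann {n : ℕ} (hn : 1 ≤ n)
    (ρ : Matrix (Fin n) (Fin n) ℂ) (hHerm : ρ.IsHermitian) (hpos : ρ.PosSemidef)
    (htr : ρ.trace = 1) :
    (∀ U ∈ Matrix.unitaryGroup (Fin n) ℂ,
      ∑ i, Real.negMulLog (((U * ρ * Uᴴ) i i).re) ≥
        ∑ i, Real.negMulLog (hHerm.eigenvalues i)) ∧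
    (∃ U ∈ Matrix.unitaryGroup (Fin n) ℂ,
      ∑ i, Real.negMulLog (((U * ρ * Uᴴ) i i).re) =
        ∑ i, Real.negMulLog (hHerm.eigenvalues i)) := by
  set W : Matrix (Fin n) (Fin n) ℂ := (hHerm.eigenvectorUnitary : Matrix (Fin n) (Fin n) ℂ)
    with hWdef
  have hW : W ∈ Matrix.unitaryGroup (Fin n) ℂ := (hHerm.eigenvectorUnitary).2
  have hspec : ρ = W * Matrix.diagonal (fun j => (hHerm.eigenvalues j : ℂ)) * Wᴴ := by
    simpa [Function.comp_def, Matrix.star_eq_conjTranspose] using hHerm.spectral_theorem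
  constructor
  · intro U hU
    set V : Matrix (Fin n) (Fin n) ℂ := U * W with hVdef
    have hVmem : V ∈ Matrix.unitaryGroup (Fin n) ℂ := mul_mem hU hW
    have hVrow : V * Vᴴ = 1 := (Matrix.mem_unitaryGroup_iff).mp hVmem
    have hVcol : Vᴴ * V = 1 := (Matrix.mem_unitaryGroup_iff').mp hVmem
    set s : Fin n → Fin n → ℝ := fun i j => Complex.normSq (V i j) with hs
    have hform : U * ρ * Uᴴ = V * Matrix.diagonal (fun j => (hHerm.eigenvalues j : ℂ)) * Vᴴ := by
      have h1 : U * ρ * Uᴴ =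
          U * (W * Matrix.diagonal (fun j => (hHerm.eigenvalues j : ℂ)) * Wᴴ) * Uᴴ := by
        rw [← hspec]
      rw [h1, hVdef, Matrix.conjTranspose_mul]
      noncomm_ring
    have hdiag : ∀ i, ((U * ρ * Uᴴ) i i).re = ∑ j, s i j * hHerm.eigenvalues j := by
      intro i
      rw [hform]
      simp only [Matrix.mul_apply, Matrix.conjTranspose_apply, Matrix.diagonal_apply,
        mul_ite, mul_zero, Finset.sum_ite_eq', Finset.mem_univ, if_true]
      rw [Complex.re_sum]
      refine Finset.sum_congr rfl fun j _ => ?_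
      have h2 : V i j * (hHerm.eigenvalues j : ℂ) * star (V i j)
          = ((Complex.normSq (V i j) * hHerm.eigenvalues j : ℝ) : ℂ) := by
        rw [mul_comm (V i j), mul_assoc, Complex.star_def, Complex.mul_conj]
        push_cast; ring
      rw [h2, Complex.ofReal_re]
    have hrow : ∀ i, ∑ j, s i j = 1 := by
      intro i
      have h := congrArg (fun M => (M i i).re) hVrow
      simp only [Matrix.mul_apply, Matrix.conjTranspose_apply, Matrix.one_apply_eq,
        Complex.one_re, Complex.mul_conj] at h
      rw [Complex.re_sum] at h
      simpa [hs, Complex.normSq_apply] using h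
    have hcol : ∀ j, ∑ i, s i j = 1 := by
      intro j
      have h := congrArg (fun M => (M j j).re) hVcol
      simp only [Matrix.mul_apply, Matrix.conjTranspose_apply, Matrix.one_apply_eq,
        Complex.one_re] at h
      rw [Complex.re_sum] at h
      simp only [mul_comm, Complex.mul_conj] at h
      simpa [hs, Complex.normSq_apply] using h
    have := jensen_aux s hHerm.eigenvalues (fun j => hpos.eigenvalues_nonneg j)
      (fun i j => Complex.normSq_nonneg _) hrow hcol
    simp only [hdiag]
    exact this
  · refine ⟨star W, Unitary.star_mem hW, ?_⟩
    have hU : star W * ρ * (star W)ᴴ = Matrix.diagonal (fun j => (hHerm.eigenvalues j : ℂ)) := by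
      rw [Matrix.star_eq_conjTranspose, Matrix.conjTranspose_conjTranspose]
      simpa [Function.comp_def, Matrix.star_eq_conjTranspose, Unitary.conjStarAlgAut_star_apply]
        using hHerm.conjStarAlgAut_star_eigenvectorUnitary
    rw [hU]
    refine Finset.sum_congr rfl fun i _ => ?_
    simp
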